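/- Assume (A1), (A2), (CFL) and let Ω be bounded. Let λ = λ_{h,Ω} be the first Dirichlet eigenvalue of −L_h on Ω with nonnegative eigenfunction φ normalized by h^N Σ_α φ(x_α) = 1. If u ≥ 0 solves the discrete reaction-diffusion scheme and I(0) := h^N Σ_{x_α∈Ω} u(x_α,0)φ(x_α) > λ^{1/(p−1)}, then u blows up in finite time (Σ_j τ_j < ∞). -/

import Mathlib

open Real Filter

/-- The discrete diffusion operator `L_h φ(x_α) = Σ_{β≠0} (φ(x_α + x_β) - φ(x_α)) ω(β)`. -/
noncomputable def discreteLh {N : ℕ} (ω : (Fin N → ℤ) → ℝ) (φ : (Fin N → ℤ) → ℝ)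
    (α : Fin N → ℤ) : ℝ :=
  ∑' β : Fin N → ℤ, (φ (α + β) - φ α) * ω β

/-- Kaplan's method: under (A1), (A2), (CFL), if `λ = λ_{h,Ω}` is the first Dirichlet
eigenvalue of `-L_h` on a bounded `Ω` with a nonnegative eigenfunction `φ` normalized in
`ℓ¹`, and the initial weighted mass satisfies
`hᴺ Σ_{x_α∈Ω} u(x_α,0) φ(x_α) > λ^{1/(p-1)}`, then `u` blows up in finite time. -/
theorem stmt14 (N : ℕ) (h p τ : ℝ) (hh : 0 < h) (hp : 1 < p) (hτ : 0 < τ)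
    (ω : (Fin N → ℤ) → ℝ)
    (hsym : ∀ α, ω (-α) = ω α) (hnonneg : ∀ α, 0 ≤ ω α) (hω0 : ω 0 = 0)
    (hsum : Summable ω) (hpos : 0 < ∑' α, ω α)
    (hA2 : ∀ i : Fin N, 0 < ω (Pi.single i 1))
    (hCFL : τ ≤ 1 / (4 * ∑' α, ω α))
    (Ω : Set (Fin N → ℝ)) (hΩb : Bornology.IsBounded Ω)
    (S : Finset (Fin N → ℤ)) (hSdef : ∀ α, α ∈ S ↔ (fun k => h * α k) ∈ Ω)
    (hS : S.Nonempty)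
    (lam : ℝ) (φ : (Fin N → ℤ) → ℝ)
    (hφnn : ∀ α, 0 ≤ φ α) (hφ0 : ∀ α, α ∉ S → φ α = 0)
    (hφnorm : h ^ N * ∑ α ∈ S, φ α = 1)
    (hφeig : ∀ α ∈ S, -(discreteLh ω φ α) = lam * φ α)
    (hleast : IsLeast {μ : ℝ | ∃ ψ : (Fin N → ℤ) → ℝ, ψ ≠ 0 ∧
        (∀ α, α ∉ S → ψ α = 0) ∧ ∀ α ∈ S, -(discreteLh ω ψ α) = μ * ψ α} lam)
    (u : ℕ → (Fin N → ℤ) → ℝ) (hu : ∀ j α, 0 ≤ u j α)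
    (hbdd : ∀ j, BddAbove (Set.range (u j)))
    (Un : ℕ → ℝ) (hUn : ∀ j, Un j = ⨆ α, u j α)
    (τs : ℕ → ℝ) (hτs : ∀ j, τs j = τ * min 1 (Un j ^ (1 - p)))
    (hscheme : ∀ j α, u (j + 1) α = u j α + τs j * (discreteLh ω (u j) α + u j α ^ p))
    (hI0 : lam ^ (1 / (p - 1)) < h ^ N * ∑ α ∈ S, u 0 α * φ α) :
    Summable τs ∧ Tendsto Un atTop atTop := by
  set W := ∑' α, ω α with hWdef
  set I : ℕ → ℝ := fun j => h ^ N * ∑ α ∈ S, u j α * φ α with hI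
  have hN : (0:ℝ) < h ^ N := pow_pos hh N
  have hUnge : ∀ j α, u j α ≤ Un j := by
    intro j α; rw [hUn j]; exact le_ciSup (hbdd j) α
  have hUnnn : ∀ j, 0 ≤ Un j := fun j => le_trans (hu j 0) (hUnge j 0)
  have hτsnn : ∀ j, 0 ≤ τs j := by
    intro j; rw [hτs j]
    exact mul_nonneg hτ.le (le_min one_pos.le (Real.rpow_nonneg (hUnnn j) _))
  have hτsleτ : ∀ j, τs j ≤ τ := by
    intro j; rw [hτs j]
    calc τ * min 1 (Un j ^ (1 - p)) ≤ τ * 1 :=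
          mul_le_mul_of_nonneg_left (min_le_left _ _) hτ.le
      _ = τ := mul_one τ
  have hτW : τ * W ≤ 1/4 := by
    have h4W : (0:ℝ) < 4 * W := by linarith
    have := (le_div_iff₀ h4W).mp hCFL
    linarith
  have hτsW : ∀ j, τs j * W ≤ 1/4 := by
    intro j
    calc τs j * W ≤ τ * W := mul_le_mul_of_nonneg_right (hτsleτ j) hpos.le
      _ ≤ 1/4 := hτW
  -- summability of the diffusion sums
  have hsummul : ∀ j α, Summable (fun β => u j (α + β) * ω β) := by
    intro j α
    exact Summable.of_nonneg_of_le (fun β => mul_nonneg (hu j _) (hnonneg β))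
      (fun β => mul_le_mul_of_nonneg_right (hUnge j _) (hnonneg β)) (hsum.mul_left (Un j))
  have hLh_split : ∀ j α, discreteLh ω (u j) α = (∑' β, u j (α + β) * ω β) - u j α * W := by
    intro j α
    unfold discreteLh
    calc (∑' β, (u j (α + β) - u j α) * ω β)
        = ∑' β, (u j (α + β) * ω β - u j α * ω β) := tsum_congr fun β => by ring
      _ = (∑' β, u j (α + β) * ω β) - ∑' β, u j α * ω β :=
          Summable.tsum_sub (hsummul j α) (hsum.mul_left _)
      _ = (∑' β, u j (α + β) * ω β) - u j α * W := by rw [tsum_mul_left]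
  have hφsummul : ∀ γ, Summable (fun β => φ (γ + β) * ω β) := by
    intro γ
    apply summable_of_ne_finset_zero (s := S.image (fun a => a - γ))
    intro β hβ
    have hz : φ (γ + β) = 0 := by
      apply hφ0
      intro hm
      exact hβ (Finset.mem_image.mpr ⟨γ + β, hm, by abel⟩)
    rw [hz, zero_mul]
  have hφsplit : ∀ γ, discreteLh ω φ γ = (∑' β, φ (γ + β) * ω β) - φ γ * W := by
    intro γ
    unfold discreteLh
    calc (∑' β, (φ (γ + β) - φ γ) * ω β)
        = ∑' β, (φ (γ + β) * ω β - φ γ * ω β) := tsum_congr fun β => by ring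
      _ = (∑' β, φ (γ + β) * ω β) - ∑' β, φ γ * ω β :=
          Summable.tsum_sub (hφsummul γ) (hsum.mul_left _)
      _ = (∑' β, φ (γ + β) * ω β) - φ γ * W := by rw [tsum_mul_left]
  -- λ ≥ 0
  have hlam0 : 0 ≤ lam := by
    obtain ⟨α₀, hα₀S, hmax⟩ := S.exists_max_image φ hS
    have hφpos : 0 < φ α₀ := by
      rcases lt_or_ge 0 (φ α₀) with hlt | hle
      · exact hlt
      · exfalso
        have hzero : ∀ α ∈ S, φ α = 0 := fun α hα =>
          le_antisymm (le_trans (hmax α hα) hle) (hφnn α)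
        have : (∑ α ∈ S, φ α) = 0 := Finset.sum_eq_zero hzero
        rw [this, mul_zero] at hφnorm; norm_num at hφnorm
    have hLle : discreteLh ω φ α₀ ≤ 0 := by
      apply tsum_nonpos
      intro β
      have hle : φ (α₀ + β) ≤ φ α₀ := by
        by_cases hmem : α₀ + β ∈ S
        · exact hmax _ hmem
        · rw [hφ0 _ hmem]; exact hφnn α₀
      exact mul_nonpos_of_nonpos_of_nonneg (by linarith) (hnonneg β)
    have heq := hφeig α₀ hα₀S
    by_contra hneg
    push_neg at hneg
    nlinarith [mul_neg_of_neg_of_pos hneg hφpos]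
  have hI0pos : 0 < I 0 := lt_of_le_of_lt (Real.rpow_nonneg hlam0 _) hI0
  have hlam_lt : lam < I 0 ^ (p - 1) := by
    have hp1 : (0:ℝ) < p - 1 := by linarith
    have e : (lam ^ (1 / (p - 1))) ^ (p - 1) = lam := by
      rw [← Real.rpow_mul hlam0]
      have : 1 / (p - 1) * (p - 1) = 1 := by field_simp
      rw [this, Real.rpow_one]
    calc lam = (lam ^ (1 / (p - 1))) ^ (p - 1) := e.symm
      _ < I 0 ^ (p - 1) := Real.rpow_lt_rpow (Real.rpow_nonneg hlam0 _) hI0 hp1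
  -- key eigenfunction identity
  have hkey2 : ∀ γ ∈ S, ∑ α ∈ S, φ α * ω (γ - α) = (W - lam) * φ γ := by
    intro γ hγ
    have e1 : ∑' β, φ (γ + β) * ω β = ∑ α ∈ S, φ α * ω (γ - α) := by
      rw [tsum_eq_sum (s := S.image (fun a => a - γ)) (fun β hβ => by
        have hz : φ (γ + β) = 0 := by
          apply hφ0
          intro hm
          exact hβ (Finset.mem_image.mpr ⟨γ + β, hm, by abel⟩)
        rw [hz, zero_mul])]
      rw [Finset.sum_image (fun x _ y _ hxy => by
        have := congrArg (· + γ) hxy; simpa using this)]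
      apply Finset.sum_congr rfl
      intro α _
      have e2 : γ + (α - γ) = α := by abel
      have e3 : ω (α - γ) = ω (γ - α) := by rw [← hsym (γ - α), neg_sub]
      rw [e2, e3]
    have e4 := hφsplit γ
    have e5 := hφeig γ hγ
    have e6 : (∑' β, φ (γ + β) * ω β) = φ γ * W - lam * φ γ := by linarith
    rw [← e1, e6]; ring
  -- discrete self-adjointness estimate
  have key4 : ∀ j, -(lam * ∑ α ∈ S, u j α * φ α) ≤ ∑ α ∈ S, discreteLh ω (u j) α * φ α := by
    intro j
    have hstep1 : ∀ α : Fin N → ℤ, (∑ γ ∈ S, u j γ * ω (γ - α)) ≤ ∑' β, u j (α + β) * ω β := by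
      intro α
      have himg : ∑ γ ∈ S, u j γ * ω (γ - α)
          = ∑ β ∈ S.image (fun γ => γ - α), u j (α + β) * ω β := by
        rw [Finset.sum_image (fun x _ y _ hxy => by
          have := congrArg (· + α) hxy; simpa using this)]
        apply Finset.sum_congr rfl
        intro γ _
        have e2 : α + (γ - α) = γ := by abel
        rw [e2]
      rw [himg]
      exact Summable.sum_le_tsum _ (fun β _ => mul_nonneg (hu j _) (hnonneg β)) (hsummul j α)
    have main : ∑ α ∈ S, ((∑ γ ∈ S, u j γ * ω (γ - α)) - u j α * W) * φ α
        ≤ ∑ α ∈ S, discreteLh ω (u j) α * φ α := by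
      apply Finset.sum_le_sum
      intro α hα
      apply mul_le_mul_of_nonneg_right _ (hφnn α)
      rw [hLh_split j α]
      exact sub_le_sub_right (hstep1 α) _
    have eq1 : ∑ α ∈ S, ((∑ γ ∈ S, u j γ * ω (γ - α)) - u j α * W) * φ α
        = -(lam * ∑ α ∈ S, u j α * φ α) := by
      have t1 : ∀ α ∈ S, ((∑ γ ∈ S, u j γ * ω (γ - α)) - u j α * W) * φ α
          = (∑ γ ∈ S, u j γ * ω (γ - α) * φ α) - u j α * W * φ α := by
        intro α _; rw [sub_mul, Finset.sum_mul]
      rw [Finset.sum_congr rfl t1, Finset.sum_sub_distrib, Finset.sum_comm]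
      have t2 : ∀ γ ∈ S, ∑ α ∈ S, u j γ * ω (γ - α) * φ α = u j γ * φ γ * (W - lam) := by
        intro γ hγ
        have e : ∑ α ∈ S, u j γ * ω (γ - α) * φ α = u j γ * ∑ α ∈ S, φ α * ω (γ - α) := by
          rw [Finset.mul_sum]; exact Finset.sum_congr rfl fun α _ => by ring
        rw [e, hkey2 γ hγ]; ring
      rw [Finset.sum_congr rfl t2]
      have t3 : ∑ γ ∈ S, u j γ * φ γ * (W - lam) = (∑ γ ∈ S, u j γ * φ γ) * (W - lam) :=
        (Finset.sum_mul _ _ _).symm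
      have t4 : ∑ α ∈ S, u j α * W * φ α = (∑ α ∈ S, u j α * φ α) * W := by
        rw [Finset.sum_mul]; exact Finset.sum_congr rfl fun α _ => by ring
      rw [t3, t4]; ring
    linarith [main, eq1.ge, eq1.le]
  -- Jensen
  have hJ : ∀ j, I j ^ p ≤ h ^ N * ∑ α ∈ S, u j α ^ p * φ α := by
    intro j
    have hconv : ConvexOn ℝ (Set.Ici 0) (fun x : ℝ => x ^ p) := convexOn_rpow hp.le
    have hw1 : ∑ α ∈ S, h ^ N * φ α = 1 := by rw [← Finset.mul_sum]; exact hφnorm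
    have hjen := hconv.map_sum_le (fun α _ => mul_nonneg hN.le (hφnn α)) hw1
      (fun α _ => (hu j α : u j α ∈ Set.Ici (0:ℝ)))
    simp only [smul_eq_mul] at hjen
    have e1 : ∑ α ∈ S, h ^ N * φ α * u j α = I j := by
      rw [hI]; simp only
      rw [Finset.mul_sum]; exact Finset.sum_congr rfl fun α _ => by ring
    have e2 : ∑ α ∈ S, h ^ N * φ α * u j α ^ p = h ^ N * ∑ α ∈ S, u j α ^ p * φ α := by
      rw [Finset.mul_sum]; exact Finset.sum_congr rfl fun α _ => by ring
    rw [e1, e2] at hjen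
    exact hjen
  -- recursion for I
  have hInext : ∀ j, I (j+1) = I j + τs j *
      (h ^ N * ∑ α ∈ S, discreteLh ω (u j) α * φ α + h ^ N * ∑ α ∈ S, u j α ^ p * φ α) := by
    intro j
    have t1 : ∀ α ∈ S, u (j+1) α * φ α
        = u j α * φ α + (τs j * (discreteLh ω (u j) α * φ α) + τs j * (u j α ^ p * φ α)) := by
      intro α _; rw [hscheme j α]; ring
    rw [hI]; simp only
    rw [Finset.sum_congr rfl t1, Finset.sum_add_distrib, Finset.sum_add_distrib,
      ← Finset.mul_sum, ← Finset.mul_sum]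
    ring
  have hrec : ∀ j, I j + τs j * (I j ^ p - lam * I j) ≤ I (j+1) := by
    intro j
    have hA := key4 j
    have hB := hJ j
    have hA' : -(lam * I j) ≤ h ^ N * ∑ α ∈ S, discreteLh ω (u j) α * φ α := by
      have := mul_le_mul_of_nonneg_left hA hN.le
      have e : h ^ N * -(lam * ∑ α ∈ S, u j α * φ α) = -(lam * I j) := by
        rw [hI]; simp only; ring
      linarith [e ▸ this]
    have hsum2 : I j ^ p - lam * I j ≤
        h ^ N * ∑ α ∈ S, discreteLh ω (u j) α * φ α + h ^ N * ∑ α ∈ S, u j α ^ p * φ α := by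
      linarith
    have := mul_le_mul_of_nonneg_left hsum2 (hτsnn j)
    rw [hInext j]
    linarith
  -- I increasing with quantitative step
  set c : ℝ := I 0 * (I 0 ^ (p-1) - lam) with hcdef
  have hc : 0 < c := mul_pos hI0pos (by linarith)
  have hstep : ∀ j, I 0 ≤ I j → I j + τs j * c ≤ I (j+1) := by
    intro j hge
    have hIj : 0 < I j := lt_of_lt_of_le hI0pos hge
    have e : I j ^ p = I j * I j ^ (p-1) := by
      calc I j ^ p = I j ^ (1 + (p-1)) := by norm_num
        _ = I j ^ (1:ℝ) * I j ^ (p-1) := Real.rpow_add hIj 1 (p-1)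
        _ = I j * I j ^ (p-1) := by rw [Real.rpow_one]
    have h2 : I 0 ^ (p-1) ≤ I j ^ (p-1) := Real.rpow_le_rpow hI0pos.le hge (by linarith)
    have h3 : c ≤ I j ^ p - lam * I j := by
      rw [e]
      have hmm : I 0 * (I 0 ^ (p-1) - lam) ≤ I j * (I j ^ (p-1) - lam) :=
        mul_le_mul hge (by linarith) (by linarith) hIj.le
      nlinarith
    have h5 : τs j * c ≤ τs j * (I j ^ p - lam * I j) :=
      mul_le_mul_of_nonneg_left h3 (hτsnn j)
    linarith [hrec j]
  have hIge : ∀ j, I 0 ≤ I j := by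
    intro j
    induction j with
    | zero => exact le_rfl
    | succ j ih =>
      have := hstep j ih
      have hτc : 0 ≤ τs j * c := mul_nonneg (hτsnn j) hc.le
      linarith
  have hIleUn : ∀ j, I j ≤ Un j := by
    intro j
    have h1 : ∑ α ∈ S, u j α * φ α ≤ ∑ α ∈ S, Un j * φ α :=
      Finset.sum_le_sum fun α _ => mul_le_mul_of_nonneg_right (hUnge j α) (hφnn α)
    have h2 : h ^ N * ∑ α ∈ S, Un j * φ α = Un j := by
      rw [← Finset.mul_sum, ← mul_assoc, mul_comm (h ^ N) (Un j), mul_assoc, hφnorm, mul_one]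
    calc I j = h ^ N * ∑ α ∈ S, u j α * φ α := by rw [hI]
      _ ≤ h ^ N * ∑ α ∈ S, Un j * φ α := mul_le_mul_of_nonneg_left h1 hN.le
      _ = Un j := h2
  -- lower recursion for Un
  have hLhlow : ∀ j α, -(u j α * W) ≤ discreteLh ω (u j) α := by
    intro j α
    rw [hLh_split j α]
    have : 0 ≤ ∑' β, u j (α + β) * ω β :=
      tsum_nonneg fun β => mul_nonneg (hu j _) (hnonneg β)
    linarith
  have hptwise : ∀ j α, (1 - τs j * W) * u j α + τs j * u j α ^ p ≤ u (j+1) α := by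
    intro j α
    rw [hscheme j α]
    have h1 := hLhlow j α
    have h2 : τs j * (-(u j α * W) + u j α ^ p)
        ≤ τs j * (discreteLh ω (u j) α + u j α ^ p) :=
      mul_le_mul_of_nonneg_left (by linarith) (hτsnn j)
    have e : (1 - τs j * W) * u j α + τs j * u j α ^ p
        = u j α + τs j * (-(u j α * W) + u j α ^ p) := by ring
    rw [e]; linarith
  have hUnrec : ∀ j, 0 < Un j →
      (1 - τs j * W) * Un j + τs j * Un j ^ p ≤ Un (j+1) := by
    intro j hposU
    have hmono : ∀ x y : ℝ, 0 ≤ x → x ≤ y →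
        (1 - τs j * W) * x + τs j * x ^ p ≤ (1 - τs j * W) * y + τs j * y ^ p := by
      intro x y hx hxy
      have h1 : (1 - τs j * W) * x ≤ (1 - τs j * W) * y :=
        mul_le_mul_of_nonneg_left hxy (by linarith [hτsW j])
      have h2 : x ^ p ≤ y ^ p := Real.rpow_le_rpow hx hxy (by linarith)
      have h3 : τs j * x ^ p ≤ τs j * y ^ p := mul_le_mul_of_nonneg_left h2 (hτsnn j)
      linarith
    have hb : ∀ n : ℕ,
        (1 - τs j * W) * (Un j * (1 - 1/(n+1))) + τs j * (Un j * (1 - 1/(n+1))) ^ p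
          ≤ Un (j+1) := by
      intro n
      have hfrac0 : (0:ℝ) < 1/((n:ℝ)+1) := by positivity
      have hfrac1 : 1/((n:ℝ)+1) ≤ 1 := by
        rw [div_le_one (by positivity)]
        have := Nat.cast_nonneg (α := ℝ) n
        linarith
      have hxnn : 0 ≤ Un j * (1 - 1/((n:ℝ)+1)) := mul_nonneg (hUnnn j) (by linarith)
      have hxlt : Un j * (1 - 1/((n:ℝ)+1)) < Un j := by nlinarith
      obtain ⟨α, hα⟩ : ∃ α, Un j * (1 - 1/((n:ℝ)+1)) < u j α := by
        exact exists_lt_of_lt_ciSup (lt_of_lt_of_le hxlt (hUn j).le)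
      calc (1 - τs j * W) * (Un j * (1 - 1/((n:ℝ)+1)))
            + τs j * (Un j * (1 - 1/((n:ℝ)+1))) ^ p
          ≤ (1 - τs j * W) * u j α + τs j * u j α ^ p := hmono _ _ hxnn hα.le
        _ ≤ u (j+1) α := hptwise j α
        _ ≤ Un (j+1) := hUnge (j+1) α
    have hcont : ContinuousAt (fun x : ℝ => (1 - τs j * W) * x + τs j * x ^ p) (Un j) :=
      (continuousAt_const.mul continuousAt_id).add
        (continuousAt_const.mul (Real.continuousAt_rpow_const _ _ (Or.inl hposU.ne')))
    have htend0 : Tendsto (fun n : ℕ => 1/((n:ℝ)+1)) atTop (nhds 0) :=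
      tendsto_one_div_add_atTop_nhds_zero_nat
    have htend : Tendsto (fun n : ℕ => Un j * (1 - 1/((n:ℝ)+1))) atTop (nhds (Un j)) := by
      have h1 : Tendsto (fun n : ℕ => (1:ℝ) - 1/((n:ℝ)+1)) atTop (nhds (1 - 0)) :=
        tendsto_const_nhds.sub htend0
      have h2 := tendsto_const_nhds (x := Un j) (f := atTop (α := ℕ)) |>.mul h1
      simpa using h2
    exact le_of_tendsto' (hcont.tendsto.comp htend) hb
  -- geometric growth once Un is large
  set M₀ : ℝ := max 1 ((2*W) ^ (1/(p-1))) with hM₀def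
  have hM₀1 : (1:ℝ) ≤ M₀ := le_max_left _ _
  have hM₀pos : (0:ℝ) < M₀ := lt_of_lt_of_le one_pos hM₀1
  have hgrow : ∀ j, M₀ ≤ Un j → (1 + τ/2) * Un j ≤ Un (j+1) := by
    intro j hM
    have h1le : (1:ℝ) ≤ Un j := le_trans hM₀1 hM
    have hposU : 0 < Un j := lt_of_lt_of_le one_pos h1le
    have hmineq : min 1 (Un j ^ (1-p)) = Un j ^ (1-p) :=
      min_eq_right (Real.rpow_le_one_of_one_le_of_nonpos h1le (by linarith))
    have hτseq : τs j = τ * Un j ^ (1-p) := by rw [hτs j, hmineq]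
    have hτsUp : τs j * Un j ^ p = τ * Un j := by
      rw [hτseq, mul_assoc, ← Real.rpow_add hposU]
      norm_num
    have h2W : (2*W) ^ (1/(p-1)) ≤ Un j := le_trans (le_max_right _ _) hM
    have h2Wpos : (0:ℝ) < (2*W) ^ (1/(p-1)) := Real.rpow_pos_of_pos (by linarith) _
    have hUn1p : Un j ^ (1-p) ≤ (2*W)⁻¹ := by
      have hmono2 := Real.rpow_le_rpow_of_nonpos h2Wpos h2W (by linarith : 1 - p ≤ 0)
      have e : ((2*W) ^ (1/(p-1))) ^ (1-p) = (2*W)⁻¹ := by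
        rw [← Real.rpow_mul (by linarith : (0:ℝ) ≤ 2*W)]
        have hp1 : p - 1 ≠ 0 := by intro hz; linarith [sub_eq_zero.mp hz]
        have e2 : 1/(p-1) * (1-p) = -1 := by field_simp; ring
        rw [e2, Real.rpow_neg_one]
      rw [← e]; exact hmono2
    have hτsW2 : τs j * W ≤ τ/2 := by
      rw [hτseq]
      have h5 : Un j ^ (1-p) * W ≤ (2*W)⁻¹ * W := mul_le_mul_of_nonneg_right hUn1p hpos.le
      have e : (2*W)⁻¹ * W = 1/2 := by
        field_simp
      calc τ * Un j ^ (1-p) * W = τ * (Un j ^ (1-p) * W) := by ring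
        _ ≤ τ * (1/2) := mul_le_mul_of_nonneg_left (by rw [← e]; exact h5) hτ.le
        _ = τ/2 := by ring
    have h5 : τs j * W * Un j ≤ τ/2 * Un j := mul_le_mul_of_nonneg_right hτsW2 hposU.le
    have h6 := hUnrec j hposU
    rw [hτsUp] at h6
    have h7 : (1 - τs j * W) * Un j = Un j - τs j * W * Un j := by ring
    linarith
  -- case analysis
  rcases Classical.em (∃ j₀, M₀ ≤ Un j₀) with ⟨j₀, hj₀⟩ | hnone
  · -- geometric regime: blow-up
    have hAk : ∀ k, M₀ ≤ Un (j₀+k) ∧ M₀ * (1+τ/2)^k ≤ Un (j₀+k) := by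
      intro k
      induction k with
      | zero => constructor <;> simpa using hj₀
      | succ k ih =>
        have hg := hgrow (j₀+k) ih.1
        have hUk := hUnnn (j₀+k)
        constructor
        · calc M₀ ≤ Un (j₀+k) := ih.1
            _ ≤ (1+τ/2) * Un (j₀+k) := by nlinarith
            _ ≤ Un (j₀+k+1) := hg
        · calc M₀ * (1+τ/2)^(k+1) = (1+τ/2) * (M₀*(1+τ/2)^k) := by ring
            _ ≤ (1+τ/2) * Un (j₀+k) := mul_le_mul_of_nonneg_left ih.2 (by linarith)
            _ ≤ Un (j₀+k+1) := hg
    set q : ℝ := (1+τ/2) ^ (1-p) with hqdef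
    have hq0 : 0 ≤ q := Real.rpow_nonneg (by linarith) _
    have hq1 : q < 1 := Real.rpow_lt_one_of_one_lt_of_neg (by linarith) (by linarith)
    have hbound : ∀ k, τs (j₀+k) ≤ (τ * M₀ ^ (1-p)) * q^k := by
      intro k
      have hU := (hAk k).2
      have hposbase : (0:ℝ) < M₀*(1+τ/2)^k := by positivity
      have h1 : τs (j₀+k) ≤ τ * Un (j₀+k) ^ (1-p) := by
        rw [hτs]
        exact mul_le_mul_of_nonneg_left (min_le_right _ _) hτ.le
      have h2 : Un (j₀+k) ^ (1-p) ≤ (M₀*(1+τ/2)^k) ^ (1-p) :=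
        Real.rpow_le_rpow_of_nonpos hposbase hU (by linarith)
      have h3 : (M₀*(1+τ/2)^k) ^ (1-p) = M₀ ^ (1-p) * q^k := by
        rw [Real.mul_rpow hM₀pos.le (by positivity)]
        congr 1
        rw [hqdef, ← Real.rpow_natCast (1+τ/2) k, ← Real.rpow_mul (by linarith),
          mul_comm ((k:ℝ)) (1-p), Real.rpow_mul (by linarith), Real.rpow_natCast]
      calc τs (j₀+k) ≤ τ * (M₀ ^ (1-p) * q^k) := by
            rw [← h3]
            exact le_trans h1 (mul_le_mul_of_nonneg_left h2 hτ.le)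
        _ = (τ * M₀ ^ (1-p)) * q^k := by ring
    have hgeo : Summable (fun k : ℕ => (τ * M₀ ^ (1-p)) * q^k) :=
      (summable_geometric_of_lt_one hq0 hq1).mul_left _
    have hshift : Summable (fun k => τs (k + j₀)) := by
      apply Summable.of_nonneg_of_le (fun k => hτsnn _) _ hgeo
      intro k
      rw [Nat.add_comm]
      exact hbound k
    constructor
    · exact (summable_nat_add_iff j₀).mp hshift
    · have hgr : (1:ℝ) < 1 + τ/2 := by linarith
      have ht1 : Tendsto (fun k : ℕ => M₀*(1+τ/2)^k) atTop atTop :=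
        (tendsto_pow_atTop_atTop_of_one_lt hgr).const_mul_atTop hM₀pos
      have ht2 : Tendsto (fun j : ℕ => M₀*(1+τ/2)^(j - j₀)) atTop atTop :=
        ht1.comp (tendsto_sub_atTop_nat j₀)
      apply tendsto_atTop_mono' atTop _ ht2
      filter_upwards [eventually_ge_atTop j₀] with j hj
      obtain ⟨k, rfl⟩ := Nat.exists_eq_add_of_le hj
      have : (j₀ + k) - j₀ = k := by omega
      rw [this]
      exact (hAk k).2
  · -- bounded regime is impossible
    exfalso
    push_neg at hnone
    have hUnposB : ∀ j, 0 < Un j := fun j =>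
      lt_of_lt_of_le hI0pos ((hIge j).trans (hIleUn j))
    set δ : ℝ := τ * min 1 (M₀ ^ (1-p)) with hδdef
    have hδpos : 0 < δ :=
      mul_pos hτ (lt_min one_pos (Real.rpow_pos_of_pos hM₀pos _))
    have hδle : ∀ j, δ ≤ τs j := by
      intro j
      rw [hτs j, hδdef]
      apply mul_le_mul_of_nonneg_left _ hτ.le
      apply min_le_min le_rfl
      exact Real.rpow_le_rpow_of_nonpos (hUnposB j) (hnone j).le (by linarith)
    have hδc : 0 < δ * c := mul_pos hδpos hc
    have hlin : ∀ j : ℕ, I 0 + j * (δ*c) ≤ I j := by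
      intro j
      induction j with
      | zero => simp
      | succ j ih =>
        have hj0 : (0:ℝ) ≤ (j:ℝ) * (δ*c) := by positivity
        have h1 := hstep j (by linarith)
        have h2 : δ * c ≤ τs j * c := mul_le_mul_of_nonneg_right (hδle j) hc.le
        push_cast
        linarith
    obtain ⟨n, hn⟩ := exists_nat_gt ((M₀ - I 0)/(δ*c))
    have h8 : M₀ - I 0 < n * (δ*c) := by
      rw [div_lt_iff₀ hδc] at hn
      linarith
    have h9 := hlin n
    have h10 := hIleUn n
    have h11 := hnone n
    linarith
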